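/- For each n ≥ 1, the function p ↦ W(p,2n) = \sum_{k=n+1}^{2n} C(2n,k)(p^k (1-p)^{2n+1-k} - p^{2n+1-k} (1-p)^k) is strictly concave on (1/2, 1), i.e., its second derivative in p is negative. -/

import Mathlib

open Finset

lemma keyA (n : ℕ) (p : ℝ) :
    ∑ k ∈ Finset.Icc (n+1) (2*n),
        (Nat.choose (2*n) k : ℝ) * (p ^ k * (1-p) ^ (2*n+1-k) - p ^ (2*n+1-k) * (1-p) ^ k)
    = (∑ k ∈ Finset.Icc (n+1) (2*n+1), (Nat.choose (2*n+1) k : ℝ) * (p ^ k * (1-p) ^ (2*n+1-k))) - p := by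
  have hp : p = ∑ k ∈ Finset.Icc 1 (2*n+1),
      (Nat.choose (2*n) (k-1) : ℝ) * (p ^ k * (1-p) ^ (2*n+1-k)) := by
    have h1 : (1:ℝ) = ∑ j ∈ Finset.range (2*n+1),
        p ^ j * (1-p) ^ (2*n-j) * (Nat.choose (2*n) j : ℝ) := by
      have h := add_pow p (1-p) (2*n)
      have h0 : p + (1-p) = 1 := by ring
      rw [h0, one_pow] at h
      exact h
    have h2 : (p:ℝ) = ∑ j ∈ Finset.range (2*n+1), (Nat.choose (2*n) j : ℝ) * (p ^ (j+1) * (1-p) ^ (2*n-j)) := by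
      calc p = p * (p + (1-p)) ^ (2*n) := by ring
      _ = p * ∑ j ∈ Finset.range (2*n+1), p ^ j * (1-p) ^ (2*n-j) * (Nat.choose (2*n) j : ℝ) := by
          rw [add_pow]
      _ = _ := by rw [Finset.mul_sum]; exact Finset.sum_congr rfl fun j hj => by ring
    calc p = ∑ j ∈ Finset.range (2*n+1), (Nat.choose (2*n) j : ℝ) * (p ^ (j+1) * (1-p) ^ (2*n-j)) := h2
    _ = _ := by
        rw [← Finset.Ico_add_one_right_eq_Icc, Finset.sum_Ico_eq_sum_range]
        have e0 : 2*n+1+1-1 = 2*n+1 := by omega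
        rw [e0]
        refine Finset.sum_congr rfl fun j hj => ?_
        simp only [Finset.mem_range] at hj
        have e1 : 1 + j - 1 = j := by omega
        have e2 : 2*n+1-(1+j) = 2*n-j := by omega
        have e3 : 1 + j = j + 1 := by omega
        rw [e1, e2, e3]
  have hneg : ∑ k ∈ Finset.Icc (n+1) (2*n), (Nat.choose (2*n) k : ℝ) * (p ^ (2*n+1-k) * (1-p) ^ k)
      = ∑ k ∈ Finset.Icc 1 n, (Nat.choose (2*n) (k-1) : ℝ) * (p ^ k * (1-p) ^ (2*n+1-k)) := by
    refine Finset.sum_nbij' (fun k => 2*n+1-k) (fun k => 2*n+1-k) ?_ ?_ ?_ ?_ ?_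
    · intro a ha; simp only [Finset.mem_Icc] at *; omega
    · intro a ha; simp only [Finset.mem_Icc] at *; omega
    · intro a ha; simp only [Finset.mem_Icc] at ha; omega
    · intro a ha; simp only [Finset.mem_Icc] at ha; omega
    · intro a ha
      simp only [Finset.mem_Icc] at ha
      have e1 : 2*n+1-(2*n+1-a) = a := by omega
      have e2 : 2*n+1-a-1 = 2*n - a := by omega
      have e3 : Nat.choose (2*n) (2*n+1-a-1) = Nat.choose (2*n) a := by
        rw [e2]; exact Nat.choose_symm (by omega)
      rw [e1, e3]
  have hsplit : ∑ k ∈ Finset.Icc 1 (2*n+1), (Nat.choose (2*n) (k-1) : ℝ) * (p ^ k * (1-p) ^ (2*n+1-k))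
      = (∑ k ∈ Finset.Icc 1 n, (Nat.choose (2*n) (k-1) : ℝ) * (p ^ k * (1-p) ^ (2*n+1-k)))
      + ∑ k ∈ Finset.Icc (n+1) (2*n+1), (Nat.choose (2*n) (k-1) : ℝ) * (p ^ k * (1-p) ^ (2*n+1-k)) := by
    rw [← Finset.Ico_add_one_right_eq_Icc, ← Finset.Ico_add_one_right_eq_Icc, ← Finset.Ico_add_one_right_eq_Icc]
    rw [← Finset.sum_Ico_consecutive _ (by omega : 1 ≤ n+1) (by omega : n+1 ≤ 2*n+1+1)]
  have hpascal : ∑ k ∈ Finset.Icc (n+1) (2*n+1), (Nat.choose (2*n+1) k : ℝ) * (p ^ k * (1-p) ^ (2*n+1-k))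
      = (∑ k ∈ Finset.Icc (n+1) (2*n+1), (Nat.choose (2*n) k : ℝ) * (p ^ k * (1-p) ^ (2*n+1-k)))
      + ∑ k ∈ Finset.Icc (n+1) (2*n+1), (Nat.choose (2*n) (k-1) : ℝ) * (p ^ k * (1-p) ^ (2*n+1-k)) := by
    rw [← Finset.sum_add_distrib]
    refine Finset.sum_congr rfl fun k hk => ?_
    simp only [Finset.mem_Icc] at hk
    obtain ⟨j, rfl⟩ : ∃ j, k = j + 1 := ⟨k - 1, by omega⟩
    have hc : Nat.choose (2*n+1) (j+1) = Nat.choose (2*n) j + Nat.choose (2*n) (j+1) := by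
      rw [Nat.choose_succ_succ]
    rw [hc, Nat.cast_add, Nat.add_sub_cancel]
    ring
  have htop : ∑ k ∈ Finset.Icc (n+1) (2*n+1), (Nat.choose (2*n) k : ℝ) * (p ^ k * (1-p) ^ (2*n+1-k))
      = ∑ k ∈ Finset.Icc (n+1) (2*n), (Nat.choose (2*n) k : ℝ) * (p ^ k * (1-p) ^ (2*n+1-k)) := by
    rw [Finset.sum_Icc_succ_top (by omega : n+1 ≤ 2*n+1)]
    have hc : Nat.choose (2*n) (2*n+1) = 0 := Nat.choose_eq_zero_of_lt (by omega)
    rw [hc]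
    push_cast
    ring
  have hL : ∑ k ∈ Finset.Icc (n+1) (2*n),
        (Nat.choose (2*n) k : ℝ) * (p ^ k * (1-p) ^ (2*n+1-k) - p ^ (2*n+1-k) * (1-p) ^ k)
      = (∑ k ∈ Finset.Icc (n+1) (2*n), (Nat.choose (2*n) k : ℝ) * (p ^ k * (1-p) ^ (2*n+1-k)))
      - ∑ k ∈ Finset.Icc (n+1) (2*n), (Nat.choose (2*n) k : ℝ) * (p ^ (2*n+1-k) * (1-p) ^ k) := by
    rw [← Finset.sum_sub_distrib]
    exact Finset.sum_congr rfl fun k hk => by ring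
  rw [hL]
  linarith [hpascal, htop, hp, hsplit, hneg]

open Finset

-- derivative of a single term  C * p^k * (1-p)^(m-k)
lemma termDeriv (m k : ℕ) (c : ℝ) (p : ℝ) :
    HasDerivAt (fun p : ℝ => c * (p ^ k * (1-p) ^ (m-k)))
      (c * ((k:ℝ) * p ^ (k-1) * (1-p) ^ (m-k) - ((m-k:ℕ):ℝ) * p ^ k * (1-p) ^ (m-k-1))) p := by
  have h1 : HasDerivAt (fun p : ℝ => p ^ k) ((k:ℝ) * p ^ (k-1)) p := hasDerivAt_pow k p
  have h2 : HasDerivAt (fun p : ℝ => (1-p) ^ (m-k))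
      (((m-k:ℕ):ℝ) * (1-p) ^ (m-k-1) * (-1)) p := by
    have hin : HasDerivAt (fun p : ℝ => 1 - p) (-1) p := by
      exact (hasDerivAt_id' (x := p)).const_sub (1:ℝ)
    exact hin.fun_pow _
  have : HasDerivAt (fun p : ℝ => c * (p ^ k * (1-p) ^ (m-k))) _ p := (h1.fun_mul h2).const_mul c
  convert this using 1
  ring

lemma keyB (n : ℕ) (p : ℝ) :
    HasDerivAt (fun p : ℝ => ∑ k ∈ Finset.Icc (n+1) (2*n+1),
        (Nat.choose (2*n+1) k : ℝ) * (p ^ k * (1-p) ^ (2*n+1-k)))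
      (((2*n+1) * Nat.choose (2*n) n : ℕ) * (p ^ n * (1-p) ^ n)) p := by
  set m := 2*n+1 with hm
  -- telescoping function
  set g : ℕ → ℝ := fun k => ((k * Nat.choose m k : ℕ) : ℝ) * p ^ (k-1) * (1-p) ^ (m-k) with hg
  have hterm : ∀ k, HasDerivAt (fun p : ℝ => (Nat.choose m k : ℝ) * (p ^ k * (1-p) ^ (m-k)))
      (g k - g (k+1)) p := by
    intro k
    have h := termDeriv m k (Nat.choose m k : ℝ) p
    convert h using 1
    have hc : (k+1) * Nat.choose m (k+1) = (m-k) * Nat.choose m k := by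
      have h := Nat.choose_succ_right_eq m k
      calc (k+1) * Nat.choose m (k+1) = Nat.choose m (k+1) * (k+1) := Nat.mul_comm _ _
      _ = Nat.choose m k * (m-k) := h
      _ = (m-k) * Nat.choose m k := Nat.mul_comm _ _
    simp only [hg]
    rw [hc]
    have e1 : m - (k+1) = m - k - 1 := by omega
    rw [e1]
    push_cast
    ring
  have hsum : HasDerivAt (fun p : ℝ => ∑ k ∈ Finset.Icc (n+1) m,
      (Nat.choose m k : ℝ) * (p ^ k * (1-p) ^ (m-k)))
      (∑ k ∈ Finset.Icc (n+1) m, (g k - g (k+1))) p :=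
    HasDerivAt.fun_sum fun k _ => hterm k
  have htel : ∑ k ∈ Finset.Icc (n+1) m, (g k - g (k+1)) = g (n+1) - g (m+1) := by
    rw [← Finset.Ico_add_one_right_eq_Icc, Finset.sum_Ico_eq_sum_range]
    have e0 : m + 1 - (n+1) = n+1 := by omega
    rw [e0]
    have h := Finset.sum_range_sub' (fun i => g (n+1+i)) (n+1)
    rw [show n+1+(n+1) = m+1 from by omega] at h
    exact h
  have hval : g (n+1) - g (m+1) = ((2*n+1) * Nat.choose (2*n) n : ℕ) * (p ^ n * (1-p) ^ n) := by
    have hz : Nat.choose m (m+1) = 0 := Nat.choose_eq_zero_of_lt (by omega)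
    have hg1 : (n+1) * Nat.choose m (n+1) = (2*n+1) * Nat.choose (2*n) n := by
      rw [hm]
      have h := (Nat.add_one_mul_choose_eq (2*n) n).symm
      simpa [Nat.succ_eq_add_one, Nat.mul_comm] using h
    simp only [hg, hz, Nat.mul_zero, Nat.cast_zero, zero_mul, mul_zero, sub_zero]
    rw [hg1]
    have e1 : n + 1 - 1 = n := by omega
    have e2 : m - (n+1) = n := by omega
    rw [e1, e2]
    ring
  rw [htel, hval] at hsum
  exact hsum

theorem stmt_5 (n : ℕ) (hn : 1 ≤ n) :
    StrictConcaveOn ℝ (Set.Ioo (1/2:ℝ) 1)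
      (fun p : ℝ => ∑ k ∈ Finset.Icc (n+1) (2*n),
        (Nat.choose (2*n) k : ℝ) *
          (p ^ k * (1-p) ^ (2*n+1-k) - p ^ (2*n+1-k) * (1-p) ^ k)) ∧
    ∀ p ∈ Set.Ioo (1/2:ℝ) 1,
      iteratedDeriv 2
        (fun p : ℝ => ∑ k ∈ Finset.Icc (n+1) (2*n),
          (Nat.choose (2*n) k : ℝ) *
            (p ^ k * (1-p) ^ (2*n+1-k) - p ^ (2*n+1-k) * (1-p) ^ k)) p < 0 := by
  set f : ℝ → ℝ := fun p => ∑ k ∈ Finset.Icc (n+1) (2*n),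
      (Nat.choose (2*n) k : ℝ) *
        (p ^ k * (1-p) ^ (2*n+1-k) - p ^ (2*n+1-k) * (1-p) ^ k) with hf
  set c : ℝ := (((2*n+1) * Nat.choose (2*n) n : ℕ) : ℝ) with hc
  have hcpos : 0 < c := by
    rw [hc]
    exact_mod_cast Nat.mul_pos (by omega) (Nat.choose_pos (by omega : n ≤ 2*n))
  -- first derivative
  have hd : ∀ p : ℝ, HasDerivAt f (c * (p ^ n * (1-p) ^ n) - 1) p := by
    intro p
    have hM := keyB n p
    have heq : f = fun p : ℝ => (∑ k ∈ Finset.Icc (n+1) (2*n+1),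
        (Nat.choose (2*n+1) k : ℝ) * (p ^ k * (1-p) ^ (2*n+1-k))) - p :=
      funext fun p => keyA n p
    rw [heq]
    exact hM.sub (hasDerivAt_id p)
  have hderivf : deriv f = fun p : ℝ => c * (p ^ n * (1-p) ^ n) - 1 :=
    funext fun p => (hd p).deriv
  -- second derivative
  have hd2 : ∀ p : ℝ, HasDerivAt (fun p : ℝ => c * (p ^ n * (1-p) ^ n) - 1)
      (c * ((n:ℝ) * p ^ (n-1) * (1-p) ^ n - (n:ℝ) * p ^ n * (1-p) ^ (n-1))) p := by
    intro p
    have h := (termDeriv (2*n) n c p).sub_const 1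
    have e : 2*n - n = n := by omega
    rw [e] at h
    exact h
  have hderiv2 : ∀ p : ℝ, deriv (deriv f) p
      = c * ((n:ℝ) * p ^ (n-1) * (1-p) ^ n - (n:ℝ) * p ^ n * (1-p) ^ (n-1)) := by
    intro p
    rw [hderivf]
    exact (hd2 p).deriv
  -- negativity
  have hneg : ∀ p ∈ Set.Ioo (1/2:ℝ) 1, deriv (deriv f) p < 0 := by
    intro p hp
    obtain ⟨hp1, hp2⟩ := hp
    rw [hderiv2 p]
    have epow : ∀ x : ℝ, x ^ n = x ^ (n-1) * x := by
      intro x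
      rw [← pow_succ]
      congr 1
      omega
    rw [epow p, epow (1-p)]
    have hA : (0:ℝ) < p ^ (n-1) := pow_pos (by linarith) _
    have hB : (0:ℝ) < (1-p) ^ (n-1) := pow_pos (by linarith) _
    have hnn : (1:ℝ) ≤ (n:ℝ) := by exact_mod_cast hn
    have key : c * ((n:ℝ) * p ^ (n-1) * ((1-p) ^ (n-1) * (1-p)) - (n:ℝ) * (p ^ (n-1) * p) * (1-p) ^ (n-1))
        = c * (n:ℝ) * p ^ (n-1) * (1-p) ^ (n-1) * (1 - 2*p) := by ring
    rw [key]
    have hpos : 0 < c * (n:ℝ) * p ^ (n-1) * (1-p) ^ (n-1) := by positivity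
    nlinarith
  constructor
  · apply strictConcaveOn_of_deriv2_neg (convex_Ioo _ _)
    · exact (continuous_iff_continuousAt.2 fun p => (hd p).differentiableAt.continuousAt).continuousOn
    · intro x hx
      rw [interior_Ioo] at hx
      have : deriv^[2] f x = deriv (deriv f) x := by
        simp [Function.iterate_succ, Function.comp]
      rw [this]
      exact hneg x hx
  · intro p hp
    rw [iteratedDeriv_succ, iteratedDeriv_one]
    exact hneg p hp
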